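/- Let r ≥ 1 and s ∈ ℝ^r, and define k_s(θ) = −Σ_{k=1}^r s_k (log m_k(θ) − log m_{k−1}(θ)) on the open subset of positive definite matrices of Sym_r. Then k_s is twice Fréchet differentiable, and at every positive definite θ its second derivative is the bilinear map on Sym_r × Sym_r given by (K, L) ↦ Σ_{k=1}^r s_k [ tr((θ_{[k]})⁻¹ K_{[k]} (θ_{[k]})⁻¹ L_{[k]}) − tr((θ_{[k−1]})⁻¹ K_{[k−1]} (θ_{[k−1]})⁻¹ L_{[k−1]}) ], where A_{[k]} denotes the top-left k×k submatrix of A and the terms with k−1 = 0 are interpreted as 0. -/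

import Mathlib

open Matrix

attribute [local instance] Matrix.normedAddCommGroup Matrix.normedSpace

/-- Coordinates on the real vector space `Sym_r` of symmetric `r × r` matrices:
the on-and-above-diagonal positions. -/
abbrev SymIdx (r : ℕ) := {p : Fin r × Fin r // p.1 ≤ p.2}

/-- The symmetric matrix with the given on-and-above-diagonal coordinates. -/
def symOf {r : ℕ} (x : SymIdx r → ℝ) : Matrix (Fin r) (Fin r) ℝ :=
  Matrix.of fun i j =>
    if h : i ≤ j then x ⟨(i, j), h⟩ else x ⟨(j, i), (le_total i j).resolve_left h⟩

lemma symOf_add {r : ℕ} (x y : SymIdx r → ℝ) : symOf (x + y) = symOf x + symOf y := by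
  ext i j; by_cases h : i ≤ j <;> simp [symOf, h]

lemma symOf_smul {r : ℕ} (c : ℝ) (x : SymIdx r → ℝ) : symOf (c • x) = c • symOf x := by
  ext i j; by_cases h : i ≤ j <;> simp [symOf, h]

/-- The top-left `k × k` submatrix. -/
def trunc {r : ℕ} (k : ℕ) (h : k ≤ r) (M : Matrix (Fin r) (Fin r) ℝ) :
    Matrix (Fin k) (Fin k) ℝ :=
  M.submatrix (Fin.castLE h) (Fin.castLE h)

/-- The bilinear form `(K, L) ↦ tr(M K_{[k]} M L_{[k]})` on `Sym_r` (in coordinates). -/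
noncomputable def trTruncBForm {r : ℕ} (k : ℕ) (h : k ≤ r)
    (M : Matrix (Fin k) (Fin k) ℝ) :
    (SymIdx r → ℝ) →ₗ[ℝ] (SymIdx r → ℝ) →ₗ[ℝ] ℝ :=
  LinearMap.mk₂ ℝ
    (fun K L => (M * trunc k h (symOf K) * M * trunc k h (symOf L)).trace)
    (fun K K' L => by
      simp [symOf_add, trunc, Matrix.submatrix_add, Matrix.mul_add, Matrix.add_mul])
    (fun c K L => by
      simp [symOf_smul, trunc, Matrix.submatrix_smul, Matrix.mul_smul, Matrix.smul_mul])
    (fun K L L' => by simp [symOf_add, trunc, Matrix.submatrix_add, Matrix.mul_add])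
    (fun c K L => by simp [symOf_smul, trunc, Matrix.submatrix_smul, Matrix.mul_smul])

/-- The bilinear form `(K, L) ↦ tr(M K_{[k]} M L_{[k]})`, as a continuous bilinear map. -/
noncomputable def trTruncBCLM {r : ℕ} (k : ℕ) (h : k ≤ r)
    (M : Matrix (Fin k) (Fin k) ℝ) :
    (SymIdx r → ℝ) →L[ℝ] (SymIdx r → ℝ) →L[ℝ] ℝ :=
  LinearMap.toContinuousLinearMap
    ((LinearMap.toContinuousLinearMap (E := SymIdx r → ℝ) (F' := ℝ)).toLinearMap ∘ₗ
      trTruncBForm k h M)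

/-- The cumulant-type function `k_s(θ) = −Σ_{k=1}^r s_k (log m_k(θ) − log m_{k−1}(θ))`,
where `k : Fin r` is the 0-indexed version of the index `k+1 ∈ {1,…,r}`. -/
noncomputable def ks {r : ℕ} (s : Fin r → ℝ) (X : SymIdx r → ℝ) : ℝ :=
  -∑ k : Fin r, s k *
    (Real.log (trunc ((k : ℕ) + 1) k.isLt (symOf X)).det -
      Real.log (trunc (k : ℕ) k.isLt.le (symOf X)).det)

noncomputable def detCMM (k : ℕ) : ContinuousMultilinearMap ℝ (fun _ : Fin k => (Fin k → ℝ)) ℝ :=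
  MultilinearMap.mkContinuous Matrix.detRowAlternating.toMultilinearMap (k.factorial) (by
    intro m
    have hdet : Matrix.detRowAlternating.toMultilinearMap m = Matrix.det (Matrix.of m) := rfl
    rw [hdet, Matrix.det_apply]
    refine (norm_sum_le _ _).trans ?_
    have h1 : ∀ σ : Equiv.Perm (Fin k),
        ‖Equiv.Perm.sign σ • ∏ i, Matrix.of m (σ i) i‖ ≤ ∏ i, ‖m i‖ := by
      intro σ
      have he : ‖Equiv.Perm.sign σ • ∏ i, Matrix.of m (σ i) i‖ = ‖∏ i, m (σ i) i‖ := by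
        rcases Int.units_eq_one_or (Equiv.Perm.sign σ) with h | h <;>
          simp [h, Units.smul_def]
      rw [he]
      calc ‖∏ i, m (σ i) i‖ = ∏ i, ‖m (σ i) i‖ := by
            simp [Real.norm_eq_abs, Finset.abs_prod]
        _ ≤ ∏ i, ‖m (σ i)‖ :=
            Finset.prod_le_prod (fun _ _ => norm_nonneg _)
              (fun i _ => norm_le_pi_norm (m (σ i)) i)
        _ = ∏ i, ‖m i‖ := Equiv.prod_comp σ (fun i => ‖m i‖)
    calc ∑ σ : Equiv.Perm (Fin k), ‖Equiv.Perm.sign σ • ∏ i, Matrix.of m (σ i) i‖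
        ≤ ∑ _σ : Equiv.Perm (Fin k), ∏ i, ‖m i‖ := Finset.sum_le_sum fun σ _ => h1 σ
      _ = (k.factorial : ℝ) * ∏ i, ‖m i‖ := by
          simp [Finset.sum_const, Fintype.card_perm, mul_comm]
  )

noncomputable def traceMulCLM (k : ℕ) (N : Matrix (Fin k) (Fin k) ℝ) :
    Matrix (Fin k) (Fin k) ℝ →L[ℝ] ℝ :=
  LinearMap.toContinuousLinearMap
    { toFun := fun H => (N * H).trace
      map_add' := fun H H' => by simp [Matrix.mul_add]
      map_smul' := fun c H => by simp [Matrix.mul_smul] }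

@[simp] lemma traceMulCLM_apply (k : ℕ) (N H : Matrix (Fin k) (Fin k) ℝ) :
    traceMulCLM k N H = (N * H).trace := rfl

lemma hasFDerivAt_det (k : ℕ) (A : Matrix (Fin k) (Fin k) ℝ) :
    HasFDerivAt Matrix.det (traceMulCLM k (Matrix.adjugate A)) A := by
  have h2 : HasFDerivAt (Matrix.det (R := ℝ) (n := Fin k))
      ((detCMM k).linearDeriv (fun i => A i)) A := (detCMM k).hasFDerivAt (x := fun i => A i)
  refine h2.congr_fderiv ?_
  symm
  ext H
  have h5 := ContinuousMultilinearMap.linearDeriv_apply (detCMM k) (fun i => A i)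
    (y := fun i => H i)
  have h3 : ∀ i, (detCMM k) (Function.update (fun i => A i) i (H i))
      = (A.updateRow i (H i)).det := fun i => rfl
  have key : (Matrix.adjugate A * H).trace = ∑ i, (A.updateRow i (H i)).det := by
    have h4 : ∀ i, (A.updateRow i (H i)).det = Matrix.cramer Aᵀ (H i) i := by
      intro i; rw [Matrix.cramer_apply, Matrix.updateCol_transpose, Matrix.det_transpose]
    have h6 : ∀ i, Matrix.cramer Aᵀ (H i) i = ∑ j, H i j * Matrix.adjugate A j i := by
      intro i
      conv_lhs => rw [show H i = ∑ j, H i j • (Pi.single j 1 : Fin k → ℝ) by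
        funext a; simp [Pi.single_apply, Finset.sum_ite_eq]]
      rw [map_sum]
      simp [Matrix.adjugate_def]
    simp only [h4, h6, Matrix.trace, Matrix.diag, Matrix.mul_apply]
    rw [Finset.sum_comm]
    exact Finset.sum_congr rfl fun i _ => Finset.sum_congr rfl fun j _ => mul_comm _ _
  exact key.trans ((h5.trans (Finset.sum_congr rfl fun i _ => h3 i)).symm)

lemma hasFDerivAt_logdet (k : ℕ) {A : Matrix (Fin k) (Fin k) ℝ} (hA : A.det ≠ 0) :
    HasFDerivAt (fun B : Matrix (Fin k) (Fin k) ℝ => Real.log B.det)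
      (traceMulCLM k A⁻¹) A := by
  have h1 := (Real.hasDerivAt_log hA).comp_hasFDerivAt A (hasFDerivAt_det k A)
  refine h1.congr_fderiv ?_
  symm
  ext H
  simp only [traceMulCLM_apply, ContinuousLinearMap.coe_smul', Pi.smul_apply, smul_eq_mul]
  rw [Matrix.inv_def, Ring.inverse_eq_inv', Matrix.smul_mul, Matrix.trace_smul, smul_eq_mul]
  rfl

noncomputable def invDerivCLM (k : ℕ) (A : Matrix (Fin k) (Fin k) ℝ) :
    Matrix (Fin k) (Fin k) ℝ →L[ℝ] Matrix (Fin k) (Fin k) ℝ :=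
  LinearMap.toContinuousLinearMap
    { toFun := fun L => -(A⁻¹ * L * A⁻¹)
      map_add' := fun L L' => by
        simp [Matrix.mul_add, Matrix.add_mul]; abel
      map_smul' := fun c L => by simp [Matrix.mul_smul, Matrix.smul_mul] }

@[simp] lemma invDerivCLM_apply (k : ℕ) (A L : Matrix (Fin k) (Fin k) ℝ) :
    invDerivCLM k A L = -(A⁻¹ * L * A⁻¹) := rfl

lemma differentiableAt_inv_matrix (k : ℕ) {A : Matrix (Fin k) (Fin k) ℝ}
    (hA : A.det ≠ 0) :
    DifferentiableAt ℝ (fun B : Matrix (Fin k) (Fin k) ℝ => B⁻¹) A := by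
  have hadj : DifferentiableAt ℝ (fun B : Matrix (Fin k) (Fin k) ℝ => Matrix.adjugate B) A := by
    apply differentiableAt_pi.2
    intro i
    apply differentiableAt_pi.2
    intro j
    have : (fun B : Matrix (Fin k) (Fin k) ℝ => Matrix.adjugate B i j)
        = fun B => (B.updateRow j (Pi.single i 1)).det := by
      funext B; rw [Matrix.adjugate_apply]
    rw [this]
    have hu : DifferentiableAt ℝ
        (fun B : Matrix (Fin k) (Fin k) ℝ => B.updateRow j (Pi.single i (1:ℝ))) A := by
      apply differentiableAt_pi.2
      intro i'
      by_cases hij : i' = j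
      · subst hij
        have : (fun B : Matrix (Fin k) (Fin k) ℝ => B.updateRow i' (Pi.single i (1:ℝ)) i')
            = fun _ => Pi.single i (1:ℝ) := by
          funext B; exact Matrix.updateRow_self
        rw [this]; exact differentiableAt_const _
      · have : (fun B : Matrix (Fin k) (Fin k) ℝ => B.updateRow j (Pi.single i (1:ℝ)) i')
            = fun B => B i' := by
          funext B; exact Matrix.updateRow_ne hij
        rw [this]
        exact (ContinuousLinearMap.proj (R := ℝ) (φ := fun _ : Fin k => Fin k → ℝ)
          i').differentiableAt
    exact (hasFDerivAt_det k _).differentiableAt.comp A hu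
  have hdet : DifferentiableAt ℝ (fun B : Matrix (Fin k) (Fin k) ℝ => (B.det)⁻¹) A :=
    ((hasFDerivAt_det k A).differentiableAt).inv hA
  have : (fun B : Matrix (Fin k) (Fin k) ℝ => B⁻¹)
      = fun B => (B.det)⁻¹ • Matrix.adjugate B := by
    funext B; rw [Matrix.inv_def, Ring.inverse_eq_inv']
  rw [this]
  exact hdet.smul hadj

lemma hasFDerivAt_inv_matrix (k : ℕ) {A : Matrix (Fin k) (Fin k) ℝ}
    (hA : A.det ≠ 0) :
    HasFDerivAt (fun B : Matrix (Fin k) (Fin k) ℝ => B⁻¹) (invDerivCLM k A) A := by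
  have hdiff := differentiableAt_inv_matrix k hA
  have hP := hdiff.hasFDerivAt
  set P := fderiv ℝ (fun B : Matrix (Fin k) (Fin k) ℝ => B⁻¹) A with hPdef
  -- the multiplication as a continuous bilinear map
  let mulCLM : Matrix (Fin k) (Fin k) ℝ →L[ℝ] Matrix (Fin k) (Fin k) ℝ →L[ℝ]
      Matrix (Fin k) (Fin k) ℝ :=
    LinearMap.toContinuousLinearMap
      ((LinearMap.toContinuousLinearMap (E := Matrix (Fin k) (Fin k) ℝ)
          (F' := Matrix (Fin k) (Fin k) ℝ)).toLinearMap ∘ₗ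
        LinearMap.mul ℝ (Matrix (Fin k) (Fin k) ℝ))
  have hmul : ∀ B C : Matrix (Fin k) (Fin k) ℝ, mulCLM B C = B * C := fun _ _ => rfl
  have hbil : IsBoundedBilinearMap ℝ
      (fun p : Matrix (Fin k) (Fin k) ℝ × Matrix (Fin k) (Fin k) ℝ => mulCLM p.1 p.2) :=
    mulCLM.isBoundedBilinearMap
  have hg : HasFDerivAt (fun B : Matrix (Fin k) (Fin k) ℝ => mulCLM B (B⁻¹))
      ((hbil.deriv (A, A⁻¹)).comp
        ((ContinuousLinearMap.id ℝ _).prod P)) A :=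
    by have := (hbil.hasFDerivAt (A, A⁻¹)).comp A ((hasFDerivAt_id A).prodMk hP); exact this
  have hev : (fun B : Matrix (Fin k) (Fin k) ℝ => mulCLM B (B⁻¹)) =ᶠ[nhds A]
      (fun _ => (1 : Matrix (Fin k) (Fin k) ℝ)) := by
    have hc : ContinuousAt (fun B : Matrix (Fin k) (Fin k) ℝ => B.det) A :=
      (hasFDerivAt_det k A).differentiableAt.continuousAt
    filter_upwards [hc.eventually_ne hA] with B hB
    rw [hmul, Matrix.mul_nonsing_inv _ (isUnit_iff_ne_zero.mpr hB)]
  have hg0 : HasFDerivAt (fun B : Matrix (Fin k) (Fin k) ℝ => mulCLM B (B⁻¹))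
      (0 : Matrix (Fin k) (Fin k) ℝ →L[ℝ] Matrix (Fin k) (Fin k) ℝ) A := by
    exact (hasFDerivAt_const (1 : Matrix (Fin k) (Fin k) ℝ) A).congr_of_eventuallyEq hev
  have hzero := hg.unique hg0
  -- pointwise: L * A⁻¹ + A * P L = 0
  have hpt : ∀ L, A * P L + L * A⁻¹ = 0 := by
    intro L
    have h := ContinuousLinearMap.ext_iff.mp hzero L
    simp [hbil, IsBoundedBilinearMap.deriv_apply, hmul] at h
    exact h
  have hAu : IsUnit A.det := isUnit_iff_ne_zero.mpr hA
  have hPformula : ∀ L, P L = -(A⁻¹ * L * A⁻¹) := by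
    intro L
    have h1 : A * P L = -(L * A⁻¹) := eq_neg_of_add_eq_zero_left (hpt L)
    calc P L = (A⁻¹ * A) * P L := by rw [Matrix.nonsing_inv_mul _ hAu, one_mul]
    _ = A⁻¹ * (A * P L) := by rw [mul_assoc]
    _ = A⁻¹ * -(L * A⁻¹) := by rw [h1]
    _ = -(A⁻¹ * L * A⁻¹) := by rw [mul_neg, mul_assoc]
  have : P = invDerivCLM k A := by
    ext L
    rw [hPformula L, invDerivCLM_apply]
  rw [← this]
  exact hP

section AuxTrunc

variable {r : ℕ}

def truncLin (r k : ℕ) (h : k ≤ r) : (SymIdx r → ℝ) →ₗ[ℝ] Matrix (Fin k) (Fin k) ℝ where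
  toFun x := trunc k h (symOf x)
  map_add' x y := by simp [symOf_add, trunc, Matrix.submatrix_add]
  map_smul' c x := by simp [symOf_smul, trunc, Matrix.submatrix_smul]

noncomputable def truncCLM (r k : ℕ) (h : k ≤ r) :
    (SymIdx r → ℝ) →L[ℝ] Matrix (Fin k) (Fin k) ℝ :=
  LinearMap.toContinuousLinearMap (truncLin r k h)

@[simp] lemma truncCLM_apply (r k : ℕ) (h : k ≤ r) (x : SymIdx r → ℝ) :
    truncCLM r k h x = trunc k h (symOf x) := rfl

noncomputable def traceTruncL (r k : ℕ) (h : k ≤ r) :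
    Matrix (Fin k) (Fin k) ℝ →L[ℝ] ((SymIdx r → ℝ) →L[ℝ] ℝ) :=
  LinearMap.toContinuousLinearMap
    { toFun := fun N => (traceMulCLM k N).comp (truncCLM r k h)
      map_add' := fun N N' => by
        ext K
        simp [Matrix.add_mul]
      map_smul' := fun c N => by
        ext K
        simp [Matrix.smul_mul] }

@[simp] lemma traceTruncL_apply (r k : ℕ) (h : k ≤ r) (N : Matrix (Fin k) (Fin k) ℝ)
    (K : SymIdx r → ℝ) :
    traceTruncL r k h N K = (N * trunc k h (symOf K)).trace := rfl

lemma hasFDerivAt_logdet_trunc (r k : ℕ) (h : k ≤ r) {x : SymIdx r → ℝ}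
    (hx : (trunc k h (symOf x)).det ≠ 0) :
    HasFDerivAt (fun y => Real.log (trunc k h (symOf y)).det)
      (traceTruncL r k h (trunc k h (symOf x))⁻¹) x :=
  by have := (hasFDerivAt_logdet k hx).comp x (truncCLM r k h).hasFDerivAt; exact this

lemma hasFDerivAt_invtrunc (r k : ℕ) (h : k ≤ r) {θ : SymIdx r → ℝ}
    (hθ : (trunc k h (symOf θ)).det ≠ 0) :
    HasFDerivAt (fun x => traceTruncL r k h (trunc k h (symOf x))⁻¹)
      ((traceTruncL r k h).comp
        ((invDerivCLM k (trunc k h (symOf θ))).comp (truncCLM r k h))) θ :=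
  (traceTruncL r k h).hasFDerivAt.comp θ
    ((hasFDerivAt_inv_matrix k hθ).comp θ (truncCLM r k h).hasFDerivAt)

lemma posDef_trunc {r k : ℕ} (h : k ≤ r) {M : Matrix (Fin r) (Fin r) ℝ}
    (hM : M.PosDef) : (trunc k h M).PosDef := by
  classical
  refine Matrix.PosDef.of_dotProduct_mulVec_pos (hM.1.submatrix _) ?_
  intro x hx
  set y : Fin r → ℝ := fun a => ∑ j, if Fin.castLE h j = a then x j else 0 with hy
  have hyc : ∀ j : Fin k, y (Fin.castLE h j) = x j := by
    intro j
    rw [hy]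
    simp only
    rw [Finset.sum_eq_single j]
    · simp
    · intro b _ hb
      have hne : Fin.castLE h b ≠ Fin.castLE h j := fun hc => hb (Fin.castLE_injective h hc)
      simp [hne]
    · simp
  have hy0 : y ≠ 0 := by
    intro h0
    apply hx
    funext j
    have h1 := congrFun h0 (Fin.castLE h j)
    rw [hyc j] at h1
    simpa using h1
  have hsum : ∀ g : Fin r → ℝ, ∑ a, y a * g a = ∑ i, x i * g (Fin.castLE h i) := by
    intro g
    rw [hy]
    simp only
    calc ∑ a, (∑ j, if Fin.castLE h j = a then x j else 0) * g a
        = ∑ a, ∑ j, (if Fin.castLE h j = a then x j * g a else 0) := by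
          refine Finset.sum_congr rfl fun a _ => ?_
          rw [Finset.sum_mul]
          refine Finset.sum_congr rfl fun j _ => ?_
          split <;> simp
      _ = ∑ j, ∑ a, (if Fin.castLE h j = a then x j * g a else 0) := Finset.sum_comm
      _ = ∑ j, x j * g (Fin.castLE h j) := by
          refine Finset.sum_congr rfl fun j _ => ?_
          rw [Finset.sum_ite_eq]
          simp
  have hpos := hM.dotProduct_mulVec_pos hy0
  have key : star x ⬝ᵥ (trunc k h M *ᵥ x) = star y ⬝ᵥ (M *ᵥ y) := by
    rw [star_trivial, star_trivial]
    unfold dotProduct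
    rw [hsum (fun a => (M *ᵥ y) a)]
    refine Finset.sum_congr rfl fun i _ => ?_
    congr 1
    unfold Matrix.mulVec dotProduct
    rw [show ∑ b, M (Fin.castLE h i) b * y b = ∑ b, y b * M (Fin.castLE h i) b from
      Finset.sum_congr rfl fun b _ => mul_comm _ _]
    rw [hsum (fun b => M (Fin.castLE h i) b)]
    refine Finset.sum_congr rfl fun j _ => ?_
    rw [trunc]
    simp [Matrix.mulVec, dotProduct, mul_comm]
  rw [key]
  exact hpos

@[simp] lemma trTruncBCLM_apply (k : ℕ) (h : k ≤ r) (M : Matrix (Fin k) (Fin k) ℝ)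
    (K L : SymIdx r → ℝ) :
    trTruncBCLM k h M K L
      = (M * trunc k h (symOf K) * M * trunc k h (symOf L)).trace := rfl

end AuxTrunc

/-- On the open set of positive definite matrices in `Sym_r`
(realized via on-and-above-diagonal coordinates), `k_s` is twice Fréchet differentiable,
and its second derivative at `θ` is the bilinear map
`(K, L) ↦ Σ_{k=1}^r s_k [tr((θ_{[k]})⁻¹ K_{[k]} (θ_{[k]})⁻¹ L_{[k]})
  − tr((θ_{[k−1]})⁻¹ K_{[k−1]} (θ_{[k−1]})⁻¹ L_{[k−1]})]`
(for `k − 1 = 0` the corresponding term involves `0 × 0` matrices, so it is `0`). -/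
theorem hasFDerivAt_fderiv_ks (r : ℕ) (hr : 1 ≤ r) (s : Fin r → ℝ) :
    ∀ θ : SymIdx r → ℝ, (symOf θ).PosDef →
      DifferentiableAt ℝ (ks s) θ ∧
      HasFDerivAt (fderiv ℝ (ks s))
        (∑ k : Fin r, s k •
          (trTruncBCLM ((k : ℕ) + 1) k.isLt
              (trunc ((k : ℕ) + 1) k.isLt (symOf θ))⁻¹ -
            trTruncBCLM (k : ℕ) k.isLt.le (trunc (k : ℕ) k.isLt.le (symOf θ))⁻¹)) θ := by
  intro θ hθ
  classical
  have hdet : ∀ (k : ℕ) (hk : k ≤ r), (trunc k hk (symOf θ)).det ≠ 0 := fun k hk =>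
    (posDef_trunc hk hθ).det_pos.ne'
  set D : (SymIdx r → ℝ) → ((SymIdx r → ℝ) →L[ℝ] ℝ) := fun x =>
    -∑ k : Fin r, s k •
      (traceTruncL r ((k : ℕ) + 1) k.isLt (trunc ((k : ℕ) + 1) k.isLt (symOf x))⁻¹ -
       traceTruncL r (k : ℕ) k.isLt.le (trunc (k : ℕ) k.isLt.le (symOf x))⁻¹) with hD
  have hks : ∀ x : SymIdx r → ℝ,
      (∀ (k : ℕ) (hk : k ≤ r), (trunc k hk (symOf x)).det ≠ 0) →
      HasFDerivAt (ks s) (D x) x := by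
    intro x hx
    rw [hD]
    have hterm : ∀ k : Fin r, HasFDerivAt (fun y => s k *
        (Real.log (trunc ((k : ℕ) + 1) k.isLt (symOf y)).det -
          Real.log (trunc (k : ℕ) k.isLt.le (symOf y)).det))
        (s k • (traceTruncL r ((k : ℕ) + 1) k.isLt
            (trunc ((k : ℕ) + 1) k.isLt (symOf x))⁻¹ -
          traceTruncL r (k : ℕ) k.isLt.le (trunc (k : ℕ) k.isLt.le (symOf x))⁻¹)) x :=
      fun k => ((hasFDerivAt_logdet_trunc r _ k.isLt (hx _ k.isLt)).sub
        (hasFDerivAt_logdet_trunc r _ k.isLt.le (hx _ k.isLt.le))).const_mul (s k)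
    exact (HasFDerivAt.fun_sum (fun k (_ : k ∈ Finset.univ) => hterm k)).neg
  have hev : ∀ᶠ x in nhds θ, ∀ (k : ℕ) (hk : k ≤ r), (trunc k hk (symOf x)).det ≠ 0 := by
    have h1 : ∀ k : Fin (r + 1), ∀ᶠ x in nhds θ,
        (trunc (k : ℕ) (Nat.lt_succ_iff.mp k.isLt) (symOf x)).det ≠ 0 := by
      intro k
      have hc : ContinuousAt
          (fun x => (trunc (k : ℕ) (Nat.lt_succ_iff.mp k.isLt) (symOf x)).det) θ :=
        ((hasFDerivAt_det _ _).differentiableAt.comp θ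
          (truncCLM r (k : ℕ) (Nat.lt_succ_iff.mp k.isLt)).differentiableAt).continuousAt
      exact hc.eventually_ne (hdet _ _)
    have h2 := Filter.eventually_all.mpr h1
    filter_upwards [h2] with x hx k hk
    exact hx ⟨k, Nat.lt_succ_of_le hk⟩
  have hDf : HasFDerivAt (ks s) (D θ) θ := hks θ hdet
  refine ⟨hDf.differentiableAt, ?_⟩
  have heq : fderiv ℝ (ks s) =ᶠ[nhds θ] D := by
    filter_upwards [hev] with x hx
    exact (hks x hx).fderiv
  have hDd : HasFDerivAt D
      (-∑ k : Fin r, s k •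
        ((traceTruncL r ((k : ℕ) + 1) k.isLt).comp
            ((invDerivCLM ((k : ℕ) + 1) (trunc ((k : ℕ) + 1) k.isLt (symOf θ))).comp
              (truncCLM r ((k : ℕ) + 1) k.isLt)) -
          (traceTruncL r (k : ℕ) k.isLt.le).comp
            ((invDerivCLM (k : ℕ) (trunc (k : ℕ) k.isLt.le (symOf θ))).comp
              (truncCLM r (k : ℕ) k.isLt.le)))) θ := by
    rw [hD]
    refine HasFDerivAt.neg ?_
    refine HasFDerivAt.fun_sum (fun k (_ : k ∈ Finset.univ) => ?_)
    exact ((hasFDerivAt_invtrunc r _ k.isLt (hdet _ k.isLt)).sub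
      (hasFDerivAt_invtrunc r _ k.isLt.le (hdet _ k.isLt.le))).const_smul (s k)
  have hfinal := hDd.congr_of_eventuallyEq heq
  convert hfinal using 1
  ext L K
  simp only [ContinuousLinearMap.coe_sum', Finset.sum_apply, ContinuousLinearMap.smul_apply,
    ContinuousLinearMap.sub_apply, ContinuousLinearMap.neg_apply, ContinuousLinearMap.coe_comp',
    Function.comp_apply, trTruncBCLM_apply, traceTruncL_apply, truncCLM_apply,
    invDerivCLM_apply, Finset.sum_neg_distrib, neg_neg, smul_eq_mul]
  rw [← Finset.sum_neg_distrib]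
  refine Finset.sum_congr rfl fun k _ => ?_
  rw [Matrix.neg_mul, Matrix.trace_neg, Matrix.neg_mul, Matrix.trace_neg]
  ring
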